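/- Let Q be an invertible linear map of ℝ^d, Λ ⊆ ℝ^d, and suppose Q(Λ − Λ) ⊆ Λ − Λ and there exist L ∈ ℕ, η ∈ ℝ^d with Q^L(Λ − Λ) ⊆ Λ − η. Then the set 𝒢 = ⋃_{k≥0} Q^{−k}(Λ − Λ) of eventual return vectors is closed under subtraction, i.e. 𝒢 − 𝒢 ⊆ 𝒢; in particular if 0 ∈ Λ − Λ then 𝒢 is an additive subgroup of ℝ^d. -/

import Mathlib

open scoped Pointwise

/-- Under invariance and algebraic coincidence, the set of eventual return
vectors `𝒢 = ⋃ k, Q^{-k}(Λ - Λ)` is closed under subtraction; in particular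
if `0 ∈ Λ - Λ` it is an additive subgroup of `ℝ^d`. -/
theorem stmt_5 {d : ℕ} (Q : Module.End ℝ (Fin d → ℝ))
    (hQ : Function.Bijective Q) (Λ : Set (Fin d → ℝ)) (hΛ : Λ.Nonempty)
    (hinv : Q '' (Λ - Λ) ⊆ Λ - Λ)
    (hcoin : ∃ (L : ℕ) (η : Fin d → ℝ),
      (Q ^ L) '' (Λ - Λ) ⊆ (fun x => x - η) '' Λ) :
    (⋃ k : ℕ, (Q ^ k) ⁻¹' (Λ - Λ)) - (⋃ k : ℕ, (Q ^ k) ⁻¹' (Λ - Λ)) ⊆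
        (⋃ k : ℕ, (Q ^ k) ⁻¹' (Λ - Λ)) ∧
      ((0 : Fin d → ℝ) ∈ Λ - Λ →
        ∃ H : AddSubgroup (Fin d → ℝ),
          (H : Set (Fin d → ℝ)) = ⋃ k : ℕ, (Q ^ k) ⁻¹' (Λ - Λ)) := by
  obtain ⟨L, η, hL⟩ := hcoin
  set G := ⋃ k : ℕ, (Q ^ k) ⁻¹' (Λ - Λ) with hG
  have hiter : ∀ j : ℕ, ∀ z ∈ Λ - Λ, (Q ^ j) z ∈ Λ - Λ := by
    intro j
    induction j with
    | zero => intro z hz; simpa using hz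
    | succ n ih =>
      intro z hz
      have h : (Q ^ (n + 1)) z = Q ((Q ^ n) z) := by
        rw [pow_succ']; rfl
      rw [h]
      exact hinv ⟨_, ih z hz, rfl⟩
  have key : ∀ x y, x ∈ G → y ∈ G → x - y ∈ G := by
    intro x y hx hy
    obtain ⟨_, ⟨k, rfl⟩, hxk⟩ := hx
    obtain ⟨_, ⟨m, rfl⟩, hym⟩ := hy
    set n := max k m with hn
    have bump : ∀ (w : Fin d → ℝ) (j : ℕ), j ≤ n → (Q ^ j) w ∈ Λ - Λ →
        (Q ^ n) w ∈ Λ - Λ := by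
      intro w j hj hw
      have h : (Q ^ n) w = (Q ^ (n - j)) ((Q ^ j) w) := by
        rw [← Module.End.mul_apply, ← pow_add, Nat.sub_add_cancel hj]
      rw [h]
      exact hiter _ _ hw
    have hxn : (Q ^ n) x ∈ Λ - Λ := bump x k (le_max_left _ _) hxk
    have hyn : (Q ^ n) y ∈ Λ - Λ := bump y m (le_max_right _ _) hym
    obtain ⟨a, ha, hax⟩ := hL ⟨_, hxn, rfl⟩
    obtain ⟨b, hb, hby⟩ := hL ⟨_, hyn, rfl⟩
    refine Set.mem_iUnion.2 ⟨n + L, ?_⟩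
    show (Q ^ (n + L)) (x - y) ∈ Λ - Λ
    have heq : (Q ^ (n + L)) (x - y) = a - b := by
      have h1 : (Q ^ (n + L)) (x - y)
          = (Q ^ L) ((Q ^ n) x) - (Q ^ L) ((Q ^ n) y) := by
        rw [map_sub, add_comm n L, pow_add]; rfl
      rw [h1, ← hax, ← hby]; exact sub_sub_sub_cancel_right a b η
    rw [heq]
    exact Set.sub_mem_sub ha hb
  refine ⟨fun z hz => ?_, fun h0 => ?_⟩
  · obtain ⟨x, hx, y, hy, rfl⟩ := hz
    exact key x y hx hy
  · have h0G : (0 : Fin d → ℝ) ∈ G := by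
      refine Set.mem_iUnion.2 ⟨0, ?_⟩
      simpa using h0
    refine ⟨{ carrier := G
              zero_mem' := h0G
              add_mem' := ?_
              neg_mem' := ?_ }, rfl⟩
    · intro a b ha hb
      have : a - (0 - b) ∈ G := key a (0 - b) ha (key 0 b h0G hb)
      simpa using this
    · intro a ha
      have : (0 : Fin d → ℝ) - a ∈ G := key 0 a h0G ha
      simpa using this
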